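/- Let s¹,…,s^N and t¹,…,t^N be vectors in ℝ^d, each of norm r > 0, and let f : ℝ^d → ℝ^m be K-Lipschitz. If the average cosine distillation loss (1/N)·Σ_n (1 − ⟨s^n,t^n⟩/(‖s^n‖‖t^n‖)) = c, then the average squared feature discrepancy (1/N)·Σ_n ‖f(s^n) − f(t^n)‖² ≤ 2K²r²c. -/

import Mathlib

theorem stmt_9 {d m N : ℕ} (hN : 0 < N)
    (s t : Fin N → EuclideanSpace ℝ (Fin d)) (r c : ℝ) (hr : 0 < r)
    (hs : ∀ n, ‖s n‖ = r) (ht : ∀ n, ‖t n‖ = r)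
    (f : EuclideanSpace ℝ (Fin d) → EuclideanSpace ℝ (Fin m))
    (K : ℝ) (hf : ∀ x y, ‖f x - f y‖ ≤ K * ‖x - y‖)
    (hc : (1 / (N : ℝ)) * ∑ n, (1 - (inner ℝ (s n) (t n) : ℝ) / (‖s n‖ * ‖t n‖)) = c) :
    (1 / (N : ℝ)) * ∑ n, ‖f (s n) - f (t n)‖ ^ 2 ≤ 2 * K ^ 2 * r ^ 2 * c := by
  subst hc
  have key : ∀ n, ‖f (s n) - f (t n)‖ ^ 2 ≤
      2 * K ^ 2 * r ^ 2 * (1 - (inner ℝ (s n) (t n) : ℝ) / (‖s n‖ * ‖t n‖)) := by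
    intro n
    have h1 : ‖f (s n) - f (t n)‖ ^ 2 ≤ (K * ‖s n - t n‖) ^ 2 := by
      have := hf (s n) (t n)
      nlinarith [norm_nonneg (f (s n) - f (t n))]
    have h2 : ‖s n - t n‖ ^ 2 = 2 * r ^ 2 - 2 * (inner ℝ (s n) (t n) : ℝ) := by
      rw [@norm_sub_sq_real]
      rw [hs n, ht n]; ring
    rw [hs n, ht n]
    have hr2 : (r * r) ≠ 0 := by positivity
    rw [sub_div' hr2] at *
    calc ‖f (s n) - f (t n)‖ ^ 2 ≤ (K * ‖s n - t n‖) ^ 2 := h1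
      _ = K ^ 2 * (2 * r ^ 2 - 2 * (inner ℝ (s n) (t n) : ℝ)) := by
          rw [mul_pow, h2]
      _ = 2 * K ^ 2 * r ^ 2 * ((1 * (r * r) - inner ℝ (s n) (t n)) / (r * r)) := by
          field_simp
  have hsum : ∑ n, ‖f (s n) - f (t n)‖ ^ 2 ≤
      ∑ n, 2 * K ^ 2 * r ^ 2 * (1 - (inner ℝ (s n) (t n) : ℝ) / (‖s n‖ * ‖t n‖)) :=
    Finset.sum_le_sum (fun n _ => key n)
  have hNpos : (0:ℝ) < (N:ℝ) := by exact_mod_cast hN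
  calc (1 / (N : ℝ)) * ∑ n, ‖f (s n) - f (t n)‖ ^ 2
      ≤ (1 / (N : ℝ)) * ∑ n, 2 * K ^ 2 * r ^ 2 *
          (1 - (inner ℝ (s n) (t n) : ℝ) / (‖s n‖ * ‖t n‖)) := by
        apply mul_le_mul_of_nonneg_left hsum; positivity
    _ = 2 * K ^ 2 * r ^ 2 * ((1 / (N : ℝ)) *
          ∑ n, (1 - (inner ℝ (s n) (t n) : ℝ) / (‖s n‖ * ‖t n‖))) := by
        rw [← Finset.mul_sum]; ring
    _ = 2 * K ^ 2 * r ^ 2 * (1 / ↑N * ∑ n, (1 - (inner ℝ (s n) (t n) : ℝ) / (‖s n‖ * ‖t n‖))) := rfl
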